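/- Let L be symmetric positive definite, c² not an eigenvalue of L, A = L − c²I nonsingular symmetric. For any vector w, the errors e^{AV}(w) = |A|^{-1}r − w and e^{P}(w) = L^{-1}r − w satisfy e^{AV}(w) = e^{P}(w) + (c²I − W_p) L^{-1}|A|^{-1} r, where W_p = 2 V_p |Λ_p| V_p* and V_p, Λ_p collect the eigenpairs of A with negative eigenvalues. -/

import Mathlib

open Matrix

/-- The matrix absolute value `|A| = V |Λ| V*` of a real symmetric matrix. -/
noncomputable def matAbs {n : Type*} [Fintype n] [DecidableEq n]
    {A : Matrix n n ℝ} (hA : A.IsHermitian) : Matrix n n ℝ :=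
  (hA.eigenvectorUnitary : Matrix n n ℝ) *
    Matrix.diagonal (fun i => |hA.eigenvalues i|) *
    star (hA.eigenvectorUnitary : Matrix n n ℝ)

/-- The negative part `V_p |Λ_p| V_p*` of a real symmetric matrix. -/
noncomputable def matNegPart {n : Type*} [Fintype n] [DecidableEq n]
    {A : Matrix n n ℝ} (hA : A.IsHermitian) : Matrix n n ℝ :=
  (hA.eigenvectorUnitary : Matrix n n ℝ) *
    Matrix.diagonal (fun i => if hA.eigenvalues i < 0 then |hA.eigenvalues i| else 0) *
    star (hA.eigenvectorUnitary : Matrix n n ℝ)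

theorem error_relation {n : Type*} [Fintype n] [DecidableEq n]
    {L : Matrix n n ℝ} (hL : L.PosDef) (c : ℝ)
    (hc : c ^ 2 ∉ spectrum ℝ L)
    {A : Matrix n n ℝ} (hAdef : A = L - c ^ 2 • (1 : Matrix n n ℝ))
    (hA : A.IsHermitian)
    (r w : n → ℝ) :
    (matAbs hA)⁻¹.mulVec r - w =
      (L⁻¹.mulVec r - w) +
        (c ^ 2 • (1 : Matrix n n ℝ) - (2 : ℝ) • matNegPart hA).mulVec
          (L⁻¹.mulVec ((matAbs hA)⁻¹.mulVec r)) := by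
  set V : Matrix n n ℝ := (hA.eigenvectorUnitary : Matrix n n ℝ) with hVdef
  set ev : n → ℝ := hA.eigenvalues with hev
  have hV1 : V * star V = 1 := (Matrix.mem_unitaryGroup_iff).mp hA.eigenvectorUnitary.2
  have hV2 : star V * V = 1 := (Matrix.mem_unitaryGroup_iff').mp hA.eigenvectorUnitary.2
  -- conjugation helper
  have conj_mul : ∀ d e : n → ℝ,
      (V * diagonal d * star V) * (V * diagonal e * star V)
        = V * diagonal (fun i => d i * e i) * star V := by
    intro d e
    calc (V * diagonal d * star V) * (V * diagonal e * star V)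
        = V * (diagonal d * (star V * V) * diagonal e) * star V := by
          simp only [Matrix.mul_assoc]
      _ = V * diagonal (fun i => d i * e i) * star V := by
          rw [hV2, Matrix.mul_one, diagonal_mul_diagonal]
  -- spectral theorem for A over ℝ
  have hAspec : A = V * diagonal ev * star V := by
    have h := hA.spectral_theorem
    rwa [show (RCLike.ofReal ∘ hA.eigenvalues : n → ℝ) = ev by
      funext i; simp [RCLike.ofReal_real_eq_id, hev]] at h
  -- A is invertible
  have hAunit : IsUnit A := by
    have h := spectrum.notMem_iff.mp hc
    have : A = -(algebraMap ℝ (Matrix n n ℝ) (c ^ 2) - L) := by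
      rw [hAdef]; simp [Algebra.algebraMap_eq_smul_one]
    rw [this]; exact h.neg
  have hdetA : A.det ≠ 0 := by
    intro h
    exact (Matrix.isUnit_iff_isUnit_det A |>.mp hAunit).ne_zero h
  have hev_ne : ∀ i, ev i ≠ 0 := by
    intro i hi
    apply hdetA
    rw [hA.det_eq_prod_eigenvalues]
    exact Finset.prod_eq_zero (Finset.mem_univ i) (by simpa using hi)
  -- L in the eigenbasis of A
  have hLspec : L = V * diagonal (fun i => ev i + c ^ 2) * star V := by
    have h1 : c ^ 2 • (1 : Matrix n n ℝ) = V * diagonal (fun _ => c ^ 2) * star V := by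
      rw [show (diagonal fun _ : n => c ^ 2) = c ^ 2 • (1 : Matrix n n ℝ) from
        (smul_one_eq_diagonal _).symm, Matrix.mul_smul, Matrix.mul_one, Matrix.smul_mul, hV1]
    have : L = A + c ^ 2 • (1 : Matrix n n ℝ) := by rw [hAdef]; ring_nf; abel
    rw [this, hAspec, h1, ← Matrix.add_mul, ← Matrix.mul_add, diagonal_add]
  have hdetV : V.det * (star V).det = 1 := by
    rw [← Matrix.det_mul, hV1, Matrix.det_one]
  have hμ_ne : ∀ i, ev i + c ^ 2 ≠ 0 := by
    intro i hi
    have hdL : L.det ≠ 0 := hL.det_pos.ne'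
    apply hdL
    rw [hLspec, Matrix.det_mul, Matrix.det_mul, det_diagonal]
    have : ∏ j, (ev j + c ^ 2) = 0 :=
      Finset.prod_eq_zero (Finset.mem_univ i) hi
    rw [this]; ring
  -- inverses
  have conj_inv : ∀ d : n → ℝ, (∀ i, d i ≠ 0) →
      (V * diagonal d * star V)⁻¹ = V * diagonal (fun i => (d i)⁻¹) * star V := by
    intro d hd
    apply Matrix.inv_eq_right_inv
    rw [conj_mul]
    have : (fun i => d i * (d i)⁻¹) = fun _ => (1 : ℝ) := by
      funext i; simp [mul_inv_cancel₀ (hd i)]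
    rw [this, diagonal_one, Matrix.mul_one, hV1]
  have hAbs : matAbs hA = V * diagonal (fun i => |ev i|) * star V := rfl
  have hAbsInv : (matAbs hA)⁻¹ = V * diagonal (fun i => |ev i|⁻¹) * star V := by
    rw [hAbs, conj_inv _ (fun i => abs_ne_zero.mpr (hev_ne i))]
  have hLinv : L⁻¹ = V * diagonal (fun i => (ev i + c ^ 2)⁻¹) * star V := by
    rw [hLspec, conj_inv _ hμ_ne]
  -- the middle factor
  have hMid : c ^ 2 • (1 : Matrix n n ℝ) - (2 : ℝ) • matNegPart hA
      = V * diagonal (fun i => c ^ 2 - 2 * (if ev i < 0 then |ev i| else 0)) * star V := by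
    have h1 : c ^ 2 • (1 : Matrix n n ℝ) = V * diagonal (fun _ => c ^ 2) * star V := by
      rw [show (diagonal fun _ : n => c ^ 2) = c ^ 2 • (1 : Matrix n n ℝ) from
        (smul_one_eq_diagonal _).symm, Matrix.mul_smul, Matrix.mul_one, Matrix.smul_mul, hV1]
    have h2 : (2 : ℝ) • matNegPart hA
        = V * diagonal (fun i => 2 * (if ev i < 0 then |ev i| else 0)) * star V := by
      show (2 : ℝ) • ((V * diagonal (fun i => if ev i < 0 then |ev i| else 0)) * star V) = _
      rw [← Matrix.smul_mul, ← Matrix.mul_smul, ← diagonal_smul]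
      congr 2
    rw [h1, h2, ← Matrix.sub_mul, ← Matrix.mul_sub, diagonal_sub]
  -- the key matrix identity
  have key : (matAbs hA)⁻¹ = L⁻¹ +
      (c ^ 2 • (1 : Matrix n n ℝ) - (2 : ℝ) • matNegPart hA) * (L⁻¹ * (matAbs hA)⁻¹) := by
    rw [hAbsInv, hLinv, hMid, conj_mul, conj_mul, ← Matrix.add_mul, ← Matrix.mul_add,
      diagonal_add]
    congr 2
    rw [diagonal_eq_diagonal_iff]
    intro i
    have h0 := hev_ne i
    have h1 := hμ_ne i
    show |ev i|⁻¹ = (ev i + c ^ 2)⁻¹ +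
      ((c ^ 2 - 2 * (if ev i < 0 then |ev i| else 0)) * ((ev i + c ^ 2)⁻¹ * |ev i|⁻¹))
    rcases lt_or_gt_of_ne h0 with h | h
    · rw [if_pos h, abs_of_neg h]
      field_simp
      try ring
    · rw [if_neg (not_lt.mpr h.le), abs_of_pos h]
      field_simp
      try ring
  calc (matAbs hA)⁻¹.mulVec r - w
      = (L⁻¹ + (c ^ 2 • (1 : Matrix n n ℝ) - (2 : ℝ) • matNegPart hA)
          * (L⁻¹ * (matAbs hA)⁻¹)).mulVec r - w := by rw [← key]
    _ = (L⁻¹.mulVec r - w) +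
        (c ^ 2 • (1 : Matrix n n ℝ) - (2 : ℝ) • matNegPart hA).mulVec
          (L⁻¹.mulVec ((matAbs hA)⁻¹.mulVec r)) := by
        rw [Matrix.add_mulVec, ← Matrix.mulVec_mulVec, ← Matrix.mulVec_mulVec]
        abel
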